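/- Let X be a compact metric space, let 𝒞 and 𝒟 be families of subsets of X, let (P^ν_𝒞) and (P^ν_𝒟) be the optimal derivation sequences for 𝒞 and 𝒟 respectively, and let (Q^ν) be the optimal derivation sequence for the family {C ∩ D : C ∈ 𝒞, D ∈ 𝒟}. Then for all ordinals ν and μ, Q^{ν # μ} ⊆ P^ν_𝒞 ∪ P^μ_𝒟. -/

import Mathlib

/-- The optimal derivation sequence for a family `𝒞` of subsets of `X`:
`P^0 = X`, `P^{ν+1} = P^ν \ ⋃{U open : ∃ C ∈ 𝒞, P^ν ∩ U ⊆ C}`, and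
`P^λ = ⋂_{μ<λ} P^μ` at limits. -/
noncomputable def optDeriv {X : Type} [TopologicalSpace X] (𝒞 : Set (Set X))
    (ν : Ordinal.{0}) : Set X :=
  Ordinal.limitRecOn ν Set.univ
    (fun _ P => P \ ⋃₀ {U : Set X | IsOpen U ∧ ∃ C ∈ 𝒞, P ∩ U ⊆ C})
    (fun o _ ih => ⋂ (μ : {μ : Ordinal.{0} // μ < o}), ih μ.1 μ.2)

universe u

namespace Ordinal

/-- Natural (Hessenberg) sum of ordinals, as in the former `Mathlib.SetTheory.Ordinal.NaturalOps`. -/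
noncomputable def nadd : Ordinal.{u} → Ordinal.{u} → Ordinal.{u}
  | a, b =>
    max (⨆ x : Set.Iio a, Order.succ (nadd x.1 b)) (⨆ x : Set.Iio b, Order.succ (nadd a x.1))
termination_by a b => (a, b)
decreasing_by all_goals cases x; decreasing_tactic

end Ordinal

namespace NaturalOps

scoped infixl:65 " ♯ " => Ordinal.nadd

end NaturalOps

namespace Ordinal

theorem lt_nadd_of_lt_left' {a a' : Ordinal.{u}} (b : Ordinal.{u}) (h : a' < a) :
    nadd a' b < nadd a b := by
  conv_rhs => rw [nadd]
  refine lt_of_lt_of_le (Order.lt_succ _) (le_trans ?_ (le_max_left _ _))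
  exact Ordinal.le_iSup (fun x : Set.Iio a => Order.succ (nadd x.1 b)) ⟨a', h⟩

theorem lt_nadd_of_lt_right' (a : Ordinal.{u}) {b b' : Ordinal.{u}} (h : b' < b) :
    nadd a b' < nadd a b := by
  conv_rhs => rw [nadd]
  refine lt_of_lt_of_le (Order.lt_succ _) (le_trans ?_ (le_max_right _ _))
  exact Ordinal.le_iSup (fun x : Set.Iio b => Order.succ (nadd a x.1)) ⟨b', h⟩

theorem nadd_le_nadd_left' {a a' : Ordinal.{u}} (h : a ≤ a') (b : Ordinal.{u}) :
    nadd a b ≤ nadd a' b := by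
  induction b using Ordinal.induction with
  | _ b IH =>
  conv_lhs => rw [nadd]
  exact max_le (ciSup_le' fun x => Order.succ_le_of_lt
      (lt_nadd_of_lt_left' b (lt_of_lt_of_le (x.2 : x.1 < a) h)))
    (ciSup_le' fun y => Order.succ_le_of_lt
      (lt_of_le_of_lt (IH y.1 y.2) (lt_nadd_of_lt_right' a' (y.2 : y.1 < b))))

theorem nadd_le_nadd_right' (a : Ordinal.{u}) {b b' : Ordinal.{u}} (h : b ≤ b') :
    nadd a b ≤ nadd a b' := by
  induction a using Ordinal.induction with
  | _ a IH =>
  conv_lhs => rw [nadd]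
  exact max_le (ciSup_le' fun x => Order.succ_le_of_lt
      (lt_of_le_of_lt (IH x.1 x.2) (lt_nadd_of_lt_left' b' (x.2 : x.1 < a))))
    (ciSup_le' fun y => Order.succ_le_of_lt
      (lt_nadd_of_lt_right' a (lt_of_lt_of_le (y.2 : y.1 < b) h)))

theorem nadd_le_nadd {a a' b b' : Ordinal.{u}} (h1 : a ≤ a') (h2 : b ≤ b') :
    nadd a b ≤ nadd a' b' :=
  (nadd_le_nadd_left' h1 b).trans (nadd_le_nadd_right' a' h2)

theorem succ_nadd (a b : Ordinal.{u}) : nadd (Order.succ a) b = Order.succ (nadd a b) := by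
  induction b using Ordinal.induction with
  | _ b IH =>
  refine le_antisymm ?_ (Order.succ_le_of_lt (lt_nadd_of_lt_left' b (Order.lt_succ a)))
  conv_lhs => rw [nadd]
  refine max_le (ciSup_le' fun x => Order.succ_le_succ
    (nadd_le_nadd_left' (Order.lt_succ_iff.mp (x.2 : x.1 < Order.succ a)) b)) (ciSup_le' fun y => ?_)
  rw [IH y.1 y.2]
  exact Order.succ_le_succ (Order.succ_le_of_lt (lt_nadd_of_lt_right' a (y.2 : y.1 < b)))

theorem nadd_succ (a b : Ordinal.{u}) : nadd a (Order.succ b) = Order.succ (nadd a b) := by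
  induction a using Ordinal.induction with
  | _ a IH =>
  refine le_antisymm ?_ (Order.succ_le_of_lt (lt_nadd_of_lt_right' a (Order.lt_succ b)))
  conv_lhs => rw [nadd]
  refine max_le (ciSup_le' fun x => ?_) (ciSup_le' fun y => Order.succ_le_succ
    (nadd_le_nadd_right' a (Order.lt_succ_iff.mp (y.2 : y.1 < Order.succ b))))
  rw [IH x.1 x.2]
  exact Order.succ_le_succ (Order.succ_le_of_lt (lt_nadd_of_lt_left' b (x.2 : x.1 < a)))

end Ordinal

theorem optDeriv_zero {X : Type} [TopologicalSpace X] (𝒞 : Set (Set X)) :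
    optDeriv 𝒞 0 = Set.univ := by
  rw [optDeriv, Ordinal.limitRecOn_zero]

theorem optDeriv_succ {X : Type} [TopologicalSpace X] (𝒞 : Set (Set X)) (ν : Ordinal.{0}) :
    optDeriv 𝒞 (Order.succ ν) = optDeriv 𝒞 ν \
      ⋃₀ {U : Set X | IsOpen U ∧ ∃ C ∈ 𝒞, optDeriv 𝒞 ν ∩ U ⊆ C} := by
  rw [optDeriv, Ordinal.limitRecOn_succ]; rfl

theorem optDeriv_limit {X : Type} [TopologicalSpace X] (𝒞 : Set (Set X)) {ν : Ordinal.{0}}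
    (h : Order.IsSuccLimit ν) :
    optDeriv 𝒞 ν = ⋂ (μ : {μ : Ordinal.{0} // μ < ν}), optDeriv 𝒞 μ.1 := by
  rw [optDeriv, Ordinal.limitRecOn_limit _ _ _ _ h]; rfl

theorem optDeriv_antitone {X : Type} [TopologicalSpace X] (𝒞 : Set (Set X)) :
    Antitone (optDeriv 𝒞) := by
  intro α β hle
  induction β using Ordinal.induction with
  | _ β IH =>
    rcases eq_or_lt_of_le hle with rfl | hlt
    · exact le_rfl
    rcases Ordinal.zero_or_succ_or_isSuccLimit β with rfl | ⟨b, rfl⟩ | hl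
    · exact absurd hlt (not_lt_of_ge (zero_le (a := α)))
    · calc optDeriv 𝒞 (Order.succ b) ≤ optDeriv 𝒞 b := by
            rw [optDeriv_succ]; exact Set.diff_subset
        _ ≤ optDeriv 𝒞 α := IH b (Order.lt_succ b) (Order.lt_succ_iff.mp hlt)
    · rw [optDeriv_limit 𝒞 hl]
      exact Set.iInter_subset_of_subset ⟨α, hlt⟩ le_rfl

theorem optDeriv_escape {X : Type} [TopologicalSpace X] (𝒞 : Set (Set X)) {ν : Ordinal.{0}}
    {x : X} (hx : x ∉ optDeriv 𝒞 ν) :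
    ∃ ν₁ < ν, x ∈ optDeriv 𝒞 ν₁ ∧ x ∉ optDeriv 𝒞 (Order.succ ν₁) := by
  induction ν using Ordinal.induction with
  | _ ν IH =>
    rcases Ordinal.zero_or_succ_or_isSuccLimit ν with rfl | ⟨b, rfl⟩ | hl
    · exact absurd (by rw [optDeriv_zero]; trivial) hx
    · by_cases hb : x ∈ optDeriv 𝒞 b
      · exact ⟨b, Order.lt_succ b, hb, hx⟩
      · obtain ⟨ν₁, h1, h2, h3⟩ := IH b (Order.lt_succ b) hb
        exact ⟨ν₁, h1.trans (Order.lt_succ b), h2, h3⟩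
    · rw [optDeriv_limit 𝒞 hl, Set.mem_iInter] at hx
      push_neg at hx
      obtain ⟨⟨b, hb⟩, h⟩ := hx
      obtain ⟨ν₁, h1, h2, h3⟩ := IH b hb h
      exact ⟨ν₁, h1.trans hb, h2, h3⟩

open scoped NaturalOps in
theorem optDeriv_inter_nadd_aux {X : Type} [TopologicalSpace X]
    (𝒞 𝒟 : Set (Set X)) (o : Ordinal.{0}) : ∀ ν μ : Ordinal.{0}, ν ♯ μ = o →
    optDeriv {s : Set X | ∃ C ∈ 𝒞, ∃ D ∈ 𝒟, s = C ∩ D} (ν ♯ μ) ⊆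
      optDeriv 𝒞 ν ∪ optDeriv 𝒟 μ := by
  set 𝒬 := {s : Set X | ∃ C ∈ 𝒞, ∃ D ∈ 𝒟, s = C ∩ D} with h𝒬
  induction o using Ordinal.induction with
  | _ o IH =>
    intro ν μ ho x hx
    by_contra hcon
    have hν : x ∉ optDeriv 𝒞 ν := fun h => hcon (Or.inl h)
    have hμ : x ∉ optDeriv 𝒟 μ := fun h => hcon (Or.inr h)
    obtain ⟨ν₁, hν₁, hxν₁, hxν₁s⟩ := optDeriv_escape 𝒞 hν
    obtain ⟨μ₁, hμ₁, hxμ₁, hxμ₁s⟩ := optDeriv_escape 𝒟 hμ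
    -- witnesses
    rw [optDeriv_succ] at hxν₁s hxμ₁s
    have hU : x ∈ ⋃₀ {U : Set X | IsOpen U ∧ ∃ C ∈ 𝒞, optDeriv 𝒞 ν₁ ∩ U ⊆ C} := by
      by_contra h; exact hxν₁s ⟨hxν₁, h⟩
    have hV : x ∈ ⋃₀ {U : Set X | IsOpen U ∧ ∃ D ∈ 𝒟, optDeriv 𝒟 μ₁ ∩ U ⊆ D} := by
      by_contra h; exact hxμ₁s ⟨hxμ₁, h⟩
    obtain ⟨U, ⟨hUopen, C, hC, hCsub⟩, hxU⟩ := hU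
    obtain ⟨V, ⟨hVopen, D, hD, hDsub⟩, hxV⟩ := hV
    set β := ν₁ ♯ μ₁ with hβ
    have hsν : Order.succ ν₁ ♯ μ₁ = Order.succ β := Ordinal.succ_nadd _ _
    have hsμ : ν₁ ♯ Order.succ μ₁ = Order.succ β := Ordinal.nadd_succ _ _
    have hle2 : Order.succ (Order.succ β) ≤ o := by
      rw [← ho, ← Ordinal.nadd_succ, ← Ordinal.succ_nadd]
      exact Ordinal.nadd_le_nadd (Order.succ_le_of_lt hν₁) (Order.succ_le_of_lt hμ₁)
    have hβ1o : Order.succ β < o := lt_of_lt_of_le (Order.lt_succ _) hle2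
    -- x ∈ Q^{β+2}
    have hxQ : x ∈ optDeriv 𝒬 (Order.succ (Order.succ β)) :=
      optDeriv_antitone 𝒬 (ho ▸ hle2 : Order.succ (Order.succ β) ≤ ν ♯ μ) hx
    rw [optDeriv_succ] at hxQ
    refine hxQ.2 ⟨U ∩ V, ⟨hUopen.inter hVopen, C ∩ D, ⟨C, hC, D, hD, rfl⟩, ?_⟩, hxU, hxV⟩
    -- Q^{β+1} ∩ (U ∩ V) ⊆ C ∩ D
    rintro y ⟨hyQ, hyU, hyV⟩
    have hy1 : y ∈ optDeriv 𝒞 (Order.succ ν₁) ∪ optDeriv 𝒟 μ₁ := by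
      have := IH (Order.succ β) hβ1o (Order.succ ν₁) μ₁ hsν
      exact this (hsν ▸ hyQ)
    have hy2 : y ∈ optDeriv 𝒞 ν₁ ∪ optDeriv 𝒟 (Order.succ μ₁) := by
      have := IH (Order.succ β) hβ1o ν₁ (Order.succ μ₁) hsμ
      exact this (hsμ ▸ hyQ)
    have hyD : y ∈ D := by
      rcases hy1 with h | h
      · rw [optDeriv_succ] at h
        exact absurd ⟨U, ⟨hUopen, C, hC, hCsub⟩, hyU⟩ h.2
      · exact hDsub ⟨h, hyV⟩
    have hyC : y ∈ C := by
      rcases hy2 with h | h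
      · exact hCsub ⟨h, hyU⟩
      · rw [optDeriv_succ] at h
        exact absurd ⟨V, ⟨hVopen, D, hD, hDsub⟩, hyV⟩ h.2
    exact ⟨hyC, hyD⟩

open scoped NaturalOps in
/-- For families `𝒞, 𝒟` of subsets of a compact metric space `X`, with optimal
derivation sequences `P^ν_𝒞`, `P^μ_𝒟`, and `Q^ν` the optimal derivation sequence for
`{C ∩ D : C ∈ 𝒞, D ∈ 𝒟}`, we have `Q^{ν # μ} ⊆ P^ν_𝒞 ∪ P^μ_𝒟` (natural sum). -/
theorem optDeriv_inter_nadd {X : Type} [MetricSpace X] [CompactSpace X]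
    (𝒞 𝒟 : Set (Set X)) (ν μ : Ordinal.{0}) :
    optDeriv {s : Set X | ∃ C ∈ 𝒞, ∃ D ∈ 𝒟, s = C ∩ D} (ν ♯ μ) ⊆
      optDeriv 𝒞 ν ∪ optDeriv 𝒟 μ := by
  exact optDeriv_inter_nadd_aux 𝒞 𝒟 (ν ♯ μ) ν μ rfl
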